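/- Let R(E₆) = ℤ[ω₁,…,ω₆,y₃,y₄]/⟨g₂, g₃, g₄, g₅, r₆, r₈, r₉, r₁₂⟩, where g₂ = 4ω₂² − c₂, g₃ = 2y₃ + 2ω₂³ − c₃, g₄ = 3y₄ + ω₂⁴ − c₄, g₅ = 2ω₂²y₃ − ω₂c₄ + c₅, r₆ = y₃² − ω₂c₅ + 2c₆, r₈ = y₄(c₄ − 2ω₁y₃) − 2c₅y₃ − ω₂²c₆ + ω₂³c₅, r₉ = 2y₃c₆ − ω₂³c₆, r₁₂ = y₄³ − c₆². Then R(E₆) is generated, as a module over the subring generated by the images of ω₁,…,ω₆, by the images of 1, y₃, y₄ and y₄². -/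

import Mathlib

open MvPolynomial

noncomputable section

/-- The polynomial ring ℤ[ω₁,…,ω₆,y₃,y₄]:
    ωᵢ = X (i-1) for 1 ≤ i ≤ 6, y₃ = X 6, y₄ = X 7. -/
abbrev E6Poly : Type := MvPolynomial (Fin 8) ℤ

/-- t₁=ω₆, t₂=ω₅−ω₆, t₃=ω₄−ω₅, t₄=ω₃−ω₄+ω₂, t₅=ω₁−ω₃+ω₂, t₆=−ω₁+ω₂. -/
def E6t : Fin 6 → E6Poly :=
  ![X 5, X 4 - X 5, X 3 - X 4, X 2 - X 3 + X 1, X 0 - X 2 + X 1, -X 0 + X 1]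

/-- c_r = e_r(t₁,…,t₆), the r-th elementary symmetric polynomial in t₁,…,t₆. -/
def E6c (r : ℕ) : E6Poly :=
  (Finset.powersetCard r (Finset.univ : Finset (Fin 6))).sum fun s => s.prod E6t

/-- The ideal ⟨g₂, g₃, g₄, g₅, r₆, r₈, r₉, r₁₂⟩,
    with ω₁ = X 0, ω₂ = X 1, y₃ = X 6, y₄ = X 7. -/
def E6rels : Ideal E6Poly :=
  Ideal.span
    { 4 * X 1 ^ 2 - E6c 2,                                        -- g₂
      2 * X 6 + 2 * X 1 ^ 3 - E6c 3,                              -- g₃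
      3 * X 7 + X 1 ^ 4 - E6c 4,                                  -- g₄
      2 * X 1 ^ 2 * X 6 - X 1 * E6c 4 + E6c 5,                    -- g₅
      X 6 ^ 2 - X 1 * E6c 5 + 2 * E6c 6,                          -- r₆
      X 7 * (E6c 4 - 2 * X 0 * X 6) - 2 * E6c 5 * X 6
        - X 1 ^ 2 * E6c 6 + X 1 ^ 3 * E6c 5,                      -- r₈
      2 * X 6 * E6c 6 - X 1 ^ 3 * E6c 6,                          -- r₉
      X 7 ^ 3 - (E6c 6) ^ 2 }                                     -- r₁₂

/-- R(E₆) = ℤ[ω₁,…,ω₆,y₃,y₄]/⟨g₂,g₃,g₄,g₅,r₆,r₈,r₉,r₁₂⟩. -/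
abbrev RE6 : Type := E6Poly ⧸ E6rels

abbrev E6q : E6Poly →+* RE6 := Ideal.Quotient.mk E6rels

def E6R' : Subalgebra ℤ RE6 :=
  Algebra.adjoin ℤ
    (Set.range fun i : Fin 6 => E6q (X (Fin.castLE (by norm_num) i)))

lemma E6hX : ∀ i : Fin 8, i.val < 6 → E6q (X i) ∈ E6R' := fun i h =>
  Algebra.subset_adjoin ⟨⟨i.val, h⟩, rfl⟩

lemma E6ht : ∀ j : Fin 6, E6q (E6t j) ∈ E6R' := by
  have h0 : E6q (E6t 0) ∈ E6R' := E6hX 5 (by decide)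
  have h1 : E6q (E6t 1) ∈ E6R' := by
    rw [show E6t 1 = X 4 - X 5 from rfl, map_sub]
    exact sub_mem (E6hX 4 (by decide)) (E6hX 5 (by decide))
  have h2 : E6q (E6t 2) ∈ E6R' := by
    rw [show E6t 2 = X 3 - X 4 from rfl, map_sub]
    exact sub_mem (E6hX 3 (by decide)) (E6hX 4 (by decide))
  have h3 : E6q (E6t 3) ∈ E6R' := by
    rw [show E6t 3 = X 2 - X 3 + X 1 from rfl, map_add, map_sub]
    exact add_mem (sub_mem (E6hX 2 (by decide)) (E6hX 3 (by decide))) (E6hX 1 (by decide))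
  have h4 : E6q (E6t 4) ∈ E6R' := by
    rw [show E6t 4 = X 0 - X 2 + X 1 from rfl, map_add, map_sub]
    exact add_mem (sub_mem (E6hX 0 (by decide)) (E6hX 2 (by decide))) (E6hX 1 (by decide))
  have h5 : E6q (E6t 5) ∈ E6R' := by
    rw [show E6t 5 = -X 0 + X 1 from rfl, map_add, map_neg]
    exact add_mem (neg_mem (E6hX 0 (by decide))) (E6hX 1 (by decide))
  intro j
  fin_cases j <;> assumption

lemma E6hc (r : ℕ) : E6q (E6c r) ∈ E6R' := by
  rw [E6c, map_sum]
  exact Subalgebra.sum_mem _ fun s _ => by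
    rw [map_prod]; exact Subalgebra.prod_mem _ fun j _ => E6ht j

/-- the generating set -/
def E6gens : Set RE6 := {1, E6q (X 6), E6q (X 7), E6q (X 7 ^ 2)}

def E6S : Submodule E6R' RE6 := Submodule.span E6R' E6gens

lemma E6hone : (1 : RE6) ∈ E6S := Submodule.subset_span (Set.mem_insert _ _)
lemma E6h3 : E6q (X 6) ∈ E6S :=
  Submodule.subset_span (Set.mem_insert_iff.mpr (Or.inr (Set.mem_insert _ _)))
lemma E6h4 : E6q (X 7) ∈ E6S :=
  Submodule.subset_span (by right; right; left; rfl)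
lemma E6h44 : E6q (X 7 ^ 2) ∈ E6S :=
  Submodule.subset_span (by right; right; right; rfl)

lemma E6hsmul {r x : RE6} (hr : r ∈ E6R') (hx : x ∈ E6S) : r * x ∈ E6S := by
  have := E6S.smul_mem ⟨r, hr⟩ hx
  simpa [Subalgebra.smul_def] using this

-- ideal generator memberships
lemma hg3mem : (2 * X 6 + 2 * X 1 ^ 3 - E6c 3 : E6Poly) ∈ E6rels :=
  Ideal.subset_span (by right; left; rfl)
lemma hg4mem : (3 * X 7 + X 1 ^ 4 - E6c 4 : E6Poly) ∈ E6rels :=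
  Ideal.subset_span (by right; right; left; rfl)
lemma hr6mem : (X 6 ^ 2 - X 1 * E6c 5 + 2 * E6c 6 : E6Poly) ∈ E6rels :=
  Ideal.subset_span (by right; right; right; right; left; rfl)
lemma hr12mem : (X 7 ^ 3 - (E6c 6) ^ 2 : E6Poly) ∈ E6rels :=
  Ideal.subset_span (by right; right; right; right; right; right; right; rfl)

-- quotient identities
lemma key1 : E6q (X 6 ^ 2) = E6q (X 1 * E6c 5 - 2 * E6c 6) := by
  rw [Ideal.Quotient.eq]
  have h : (X 6 ^ 2 - (X 1 * E6c 5 - 2 * E6c 6) : E6Poly)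
      = X 6 ^ 2 - X 1 * E6c 5 + 2 * E6c 6 := by ring
  rw [h]; exact hr6mem

lemma key2 : E6q (X 6 * X 7)
    = E6q ((E6c 4 - X 1 ^ 4) * X 6 - (E6c 3 - 2 * X 1 ^ 3) * X 7) := by
  rw [Ideal.Quotient.eq]
  have h : (X 6 * X 7 - ((E6c 4 - X 1 ^ 4) * X 6 - (E6c 3 - 2 * X 1 ^ 3) * X 7) : E6Poly)
      = X 6 * (3 * X 7 + X 1 ^ 4 - E6c 4) - X 7 * (2 * X 6 + 2 * X 1 ^ 3 - E6c 3) := by ring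
  rw [h]
  exact sub_mem (Ideal.mul_mem_left _ _ hg4mem) (Ideal.mul_mem_left _ _ hg3mem)

lemma key3 : E6q (X 7 ^ 2 * X 6)
    = E6q ((E6c 4 - X 1 ^ 4) * (X 6 * X 7) - (E6c 3 - 2 * X 1 ^ 3) * X 7 ^ 2) := by
  rw [Ideal.Quotient.eq]
  have h : (X 7 ^ 2 * X 6 - ((E6c 4 - X 1 ^ 4) * (X 6 * X 7) - (E6c 3 - 2 * X 1 ^ 3) * X 7 ^ 2) : E6Poly)
      = X 7 * (X 6 * (3 * X 7 + X 1 ^ 4 - E6c 4) - X 7 * (2 * X 6 + 2 * X 1 ^ 3 - E6c 3)) := by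
    ring
  rw [h]
  exact Ideal.mul_mem_left _ _
    (sub_mem (Ideal.mul_mem_left _ _ hg4mem) (Ideal.mul_mem_left _ _ hg3mem))

lemma key4 : E6q (X 7 ^ 3) = E6q ((E6c 6) ^ 2) := by
  rw [Ideal.Quotient.eq]; exact hr12mem

-- scalar memberships
lemma hamem : E6q (E6c 4 - X 1 ^ 4) ∈ E6R' := by
  rw [map_sub, map_pow]
  exact sub_mem (E6hc 4) (pow_mem (E6hX 1 (by decide)) 4)
lemma hbmem : E6q (E6c 3 - 2 * X 1 ^ 3) ∈ E6R' := by
  rw [map_sub, map_mul, map_pow]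
  exact sub_mem (E6hc 3) (mul_mem (by exact_mod_cast Subalgebra.natCast_mem E6R' 2)
    (pow_mem (E6hX 1 (by decide)) 3))

-- key products in E6S
lemma hS66 : E6q (X 6) * E6q (X 6) ∈ E6S := by
  rw [← map_mul, ← sq, key1]
  have hr : E6q (X 1 * E6c 5 - 2 * E6c 6) ∈ E6R' := by
    rw [map_sub, map_mul, map_mul]
    exact sub_mem (mul_mem (E6hX 1 (by decide)) (E6hc 5))
      (mul_mem (by exact_mod_cast Subalgebra.natCast_mem E6R' 2) (E6hc 6))
  simpa using E6hsmul hr E6hone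

lemma hS67 : E6q (X 6 * X 7) ∈ E6S := by
  rw [key2, map_sub, map_mul, map_mul]
  exact sub_mem (E6hsmul hamem E6h3) (E6hsmul hbmem E6h4)

lemma hS447 : E6q (X 7 ^ 2) * E6q (X 6) ∈ E6S := by
  rw [← map_mul, key3, map_sub, map_mul, map_mul]
  exact sub_mem (E6hsmul hamem hS67) (E6hsmul hbmem E6h44)

lemma hS444 : E6q (X 7 ^ 2) * E6q (X 7) ∈ E6S := by
  rw [← map_mul, show (X 7 ^ 2 * X 7 : E6Poly) = X 7 ^ 3 by ring, key4]
  have hr : E6q ((E6c 6) ^ 2) ∈ E6R' := by rw [map_pow]; exact pow_mem (E6hc 6) 2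
  simpa using E6hsmul hr E6hone

lemma E6mul3 {x : RE6} (hx : x ∈ E6S) : x * E6q (X 6) ∈ E6S := by
  induction hx using Submodule.span_induction with
  | mem y hy =>
    rcases hy with rfl | rfl | rfl | rfl
    · simpa using E6h3
    · exact hS66
    · rw [← map_mul, mul_comm (X 7) (X 6)]; exact hS67
    · exact hS447
  | zero => simp
  | add a b _ _ ha hb => rw [add_mul]; exact E6S.add_mem ha hb
  | smul r a _ ha => rw [smul_mul_assoc]; exact E6S.smul_mem r ha

lemma E6mul4 {x : RE6} (hx : x ∈ E6S) : x * E6q (X 7) ∈ E6S := by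
  induction hx using Submodule.span_induction with
  | mem y hy =>
    rcases hy with rfl | rfl | rfl | rfl
    · simpa using E6h4
    · rw [← map_mul]; exact hS67
    · rw [← map_mul, ← sq]; exact E6h44
    · exact hS444
  | zero => simp
  | add a b _ _ ha hb => rw [add_mul]; exact E6S.add_mem ha hb
  | smul r a _ ha => rw [smul_mul_assoc]; exact E6S.smul_mem r ha

lemma E6span_top : E6S = ⊤ := by
  rw [eq_top_iff]
  rintro x -
  obtain ⟨p, rfl⟩ := Ideal.Quotient.mk_surjective x
  induction p using MvPolynomial.induction_on with
  | C a =>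
    have h1 : (algebraMap ℤ RE6 a) ∈ E6R' := Subalgebra.algebraMap_mem _ a
    have h2 : E6q (C a) = algebraMap ℤ RE6 a * 1 := by
      rw [mul_one]; rfl
    rw [show (Ideal.Quotient.mk E6rels) (C a) = E6q (C a) from rfl, h2]
    exact E6hsmul h1 E6hone
  | add p q hp hq =>
    rw [map_add]; exact E6S.add_mem hp hq
  | mul_X p i hp =>
    rw [map_mul]
    by_cases h : i.val < 6
    · have := E6hsmul (E6hX i h) hp
      rwa [mul_comm]
    · have h2 : i.val = 6 ∨ i.val = 7 := by omega
      rcases h2 with h2 | h2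
      · have : i = (6 : Fin 8) := Fin.ext (by simpa using h2)
        subst this; exact E6mul3 hp
      · have : i = (7 : Fin 8) := Fin.ext (by simpa using h2)
        subst this; exact E6mul4 hp


/-- Proposition 1 for G = E₆: R(E₆) is generated, as a module over the subring
    generated by the images of ω₁,…,ω₆, by the images of 1, y₃, y₄ and y₄². -/
theorem RE6_spanned_by_one_y3_y4_y4sq :
    Submodule.span
      (Algebra.adjoin ℤ
        (Set.range fun i : Fin 6 =>
          Ideal.Quotient.mk E6rels (X (Fin.castLE (by norm_num) i))))
      ({1, Ideal.Quotient.mk E6rels (X 6), Ideal.Quotient.mk E6rels (X 7),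
        Ideal.Quotient.mk E6rels (X 7 ^ 2)} : Set RE6) = ⊤ := by
  exact E6span_top
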